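/- Assume Σ_j Γᵏⱼ = Γᵏ for every k = 1,…,m. Then for every α ∈ 𝓕_m(Ω), every k ∈ {1,…,m} and every j ∈ {1,…,N_k}, the gradients satisfy Γᵏ·∇_{zᵏⱼ}F(0) = Γᵏⱼ·∇_{aᵏ}𝓗(α) in ℝ². In particular, if α is a critical point of 𝓗 then ∇F(0) = 0. -/

import Mathlib

noncomputable section

open Real

/-- The plane `ℝ²` with its Euclidean structure. -/
abbrev R2 : Type := EuclideanSpace ℝ (Fin 2)

/-- The standard symplectic matrix `J` (rotation by `-π/2`): `J(x₁,x₂) = (x₂,-x₁)`. -/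
def Jrot (x : R2) : R2 := (WithLp.equiv 2 (Fin 2 → ℝ)).symm ![x 1, -(x 0)]

/-- The rotation `e^{θJ}` of the plane. -/
def rotate (θ : ℝ) (x : R2) : R2 :=
  (WithLp.equiv 2 (Fin 2 → ℝ)).symm
    ![Real.cos θ * x 0 + Real.sin θ * x 1, -Real.sin θ * x 0 + Real.cos θ * x 1]

/-- The generalized Green's function `G(x,y) = -(1/2π) log|x-y| - g(x,y)`. -/
def Gf (g : R2 → R2 → ℝ) (x y : R2) : ℝ := -(1 / (2 * π)) * Real.log ‖x - y‖ - g x y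

/-- `z` is a configuration of pairwise distinct points of `Ω`. -/
def Conf {ι : Type*} (Ω : Set R2) (z : ι → R2) : Prop :=
  (∀ i, z i ∈ Ω) ∧ ∀ i i', i ≠ i' → z i ≠ z i'

/-- The `m`-vortex Hamiltonian `𝓗`. -/
def mHam {m : ℕ} (g : R2 → R2 → ℝ) (Γ : Fin m → ℝ) (a : Fin m → R2) : ℝ :=
  (∑ k, ∑ k', if k ≠ k' then Γ k * Γ k' * Gf g (a k) (a k') else 0)
    - ∑ k, Γ k ^ 2 * g (a k) (a k)

/-- Partial gradient `∇_{zᵢ} f(z) ∈ ℝ²` of a function of several planar variables. -/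
def pgrad {ι : Type*} [DecidableEq ι] (f : (ι → R2) → ℝ) (z : ι → R2) (i : ι) : R2 :=
  gradient (fun p => f (Function.update z i p)) (z i)

/-- `i`-th block of the Hessian of `f` at `z` applied to `w`, `(∇²f(z)w)ᵢ ∈ ℝ²`. -/
def hessVec {ι : Type*} [Fintype ι] [DecidableEq ι] (f : (ι → R2) → ℝ) (z w : ι → R2)
    (i : ι) : R2 :=
  gradient (fun p => fderiv ℝ f (Function.update z i p) w) (z i)

/-- Kernel of the Hessian `∇²f(z)` viewed as a map into the dual space. -/
def hessKer {ι : Type*} [Fintype ι] (f : (ι → R2) → ℝ) (z : ι → R2) :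
    Submodule ℝ (ι → R2) :=
  LinearMap.ker (fderiv ℝ (fderiv ℝ f) z).toLinearMap

/-- `z : ℝ → (ι → ℝ²)` solves the vortex system `Γᵢ żᵢ = J ∇_{zᵢ} Ham(z)` on `I`. -/
def IsVortexSol {ι : Type*} [Fintype ι] [DecidableEq ι] (Γv : ι → ℝ)
    (Ham : (ι → R2) → ℝ) (I : Set ℝ) (z : ℝ → ι → R2) : Prop :=
  ∀ t ∈ I, ∀ i, HasDerivAt (fun s => Γv i • z s i) (Jrot (pgrad Ham (z t) i)) t

/-- The whole-plane `n`-vortex Hamiltonian. -/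
def planeHam {n : ℕ} (Γk : Fin n → ℝ) (z : Fin n → R2) : ℝ :=
  -(1 / (2 * π)) * ∑ j, ∑ j', if j ≠ j' then Γk j * Γk j' * Real.log ‖z j - z j'‖ else 0

/-- `Z` is a relative equilibrium `Z(t) = e^{±J t/ordσ} z⁰` of the whole-plane system. -/
def IsRelEq {n : ℕ} (Γk : Fin n → ℝ) (ordσ : ℕ) (Z : ℝ → Fin n → R2) : Prop :=
  (∃ ω : ℝ, (ω = 1 ∨ ω = -1) ∧ ∃ z0 : Fin n → R2,
      (∀ j j', j ≠ j' → z0 j ≠ z0 j') ∧ ∀ t j, Z t j = rotate (ω * t / (ordσ : ℝ)) (z0 j)) ∧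
  IsVortexSol Γk (planeHam Γk) Set.univ Z

/-- `w` solves the linearization `Γⱼẇⱼ = J(∇²H_{ℝ²}(Z(t))w)ⱼ` and is `σ`-symmetric. -/
def IsLinSol {n : ℕ} (Γk : Fin n → ℝ) (σ : Equiv.Perm (Fin n)) (Z : ℝ → Fin n → R2)
    (w : ℝ → Fin n → R2) : Prop :=
  (∀ t j, HasDerivAt (fun s => Γk j • w s j)
      (Jrot (hessVec (planeHam Γk) (Z t) (w t) j)) t) ∧
  ∀ t j, w (t + 2 * π) (σ⁻¹ j) = w t j

/-- `σ`-nondegeneracy of a relative equilibrium: `σ*Z(·+2π) = Z` and the space of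
`σ`-symmetric solutions of the linearized equation is exactly 3-dimensional. -/
def SigmaNondeg {n : ℕ} (Γk : Fin n → ℝ) (σ : Equiv.Perm (Fin n)) (Z : ℝ → Fin n → R2) :
    Prop :=
  (∀ t j, Z (t + 2 * π) (σ⁻¹ j) = Z t j) ∧
  ∃ W : Fin 3 → ℝ → Fin n → R2,
    LinearIndependent ℝ W ∧ (∀ p, IsLinSol Γk σ Z (W p)) ∧
    ∀ w, IsLinSol Γk σ Z w → w ∈ Submodule.span ℝ (Set.range W)

/-- The `N`-vortex Hamiltonian `H` on clustered configurations. -/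
def NHam {m : ℕ} {Nk : Fin m → ℕ} (g : R2 → R2 → ℝ)
    (Γc : (k : Fin m) → Fin (Nk k) → ℝ) (z : ((k : Fin m) × Fin (Nk k)) → R2) : ℝ :=
  (∑ i, ∑ i', if i ≠ i' then Γc i.1 i.2 * Γc i'.1 i'.2 * Gf g (z i) (z i') else 0)
    - ∑ i, Γc i.1 i.2 ^ 2 * g (z i) (z i)

/-- Square of the `H¹_T` distance of two (`C¹`, `T`-periodic) curves. -/
def H1distSq {ι : Type*} [Fintype ι] (T : ℝ) (u v : ℝ → ι → R2) : ℝ :=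
  ∫ t in (0:ℝ)..T,
    ((∑ i, ‖u t i - v t i‖ ^ 2) +
      ∑ i, ‖deriv (fun s => u s i) t - deriv (fun s => v s i) t‖ ^ 2)

/-- The function `F` appearing in the rescaled Hamiltonian. -/
def Ffun {m : ℕ} {Nk : Fin m → ℕ} (g : R2 → R2 → ℝ)
    (Γc : (k : Fin m) → Fin (Nk k) → ℝ) (α : Fin m → R2)
    (z : ((k : Fin m) × Fin (Nk k)) → R2) : ℝ :=
  (∑ i, ∑ i', if i.1 ≠ i'.1 then
      Γc i.1 i.2 * Γc i'.1 i'.2 * Gf g (z i + α i.1) (z i' + α i'.1) else 0)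
    - ∑ k, ∑ j, ∑ j', Γc k j * Γc k j' * g (z ⟨k, j⟩ + α k) (z ⟨k, j'⟩ + α k)

/-- The decoupled limit Hamiltonian `H₀(u) = Σₖ Hᵏ_{ℝ²}(uᵏ)`. -/
def H0 {m : ℕ} {Nk : Fin m → ℕ} (Γc : (k : Fin m) → Fin (Nk k) → ℝ)
    (u : ((k : Fin m) × Fin (Nk k)) → R2) : ℝ :=
  ∑ k, planeHam (Γc k) (fun j => u ⟨k, j⟩)

/-- The rescaled Hamiltonian `H_r(u) = H₀(u) + F(ru) - 𝓗(α)`. -/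
def Hr {m : ℕ} {Nk : Fin m → ℕ} (g : R2 → R2 → ℝ) (Γ : Fin m → ℝ)
    (Γc : (k : Fin m) → Fin (Nk k) → ℝ) (α : Fin m → R2) (r : ℝ)
    (u : ((k : Fin m) × Fin (Nk k)) → R2) : ℝ :=
  H0 Γc u + Ffun g Γc α (r • u) - mHam g Γ α


/-- Auxiliary: splitting a double sum at a distinguished index. -/
lemma sum_split {ι : Type*} [Fintype ι] [DecidableEq ι] (I : ι) (f : ι → ι → ℝ) :
    ∑ i, ∑ i', f i i' = f I I + (∑ i' ∈ Finset.univ.erase I, f I i')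
      + (∑ i ∈ Finset.univ.erase I, f i I)
      + ∑ i ∈ Finset.univ.erase I, ∑ i' ∈ Finset.univ.erase I, f i i' := by
  rw [← Finset.add_sum_erase _ (fun i => ∑ i', f i i') (Finset.mem_univ I),
      ← Finset.add_sum_erase _ (f I) (Finset.mem_univ I)]
  rw [Finset.sum_congr rfl
    (fun i _ => (Finset.add_sum_erase _ (f i) (Finset.mem_univ I)).symm),
    Finset.sum_add_distrib]
  ring

/-- Auxiliary: a sum over `univ.erase k` as a full sum of an `if`. -/
lemma ite_sum_full {ι : Type*} [Fintype ι] [DecidableEq ι] (k : ι) (e : ι → ℝ) :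
    ∑ i ∈ Finset.univ.erase k, e i = ∑ i, (if k ≠ i then e i else 0) := by
  rw [← Finset.sum_erase (Finset.univ) (f := fun i => if k ≠ i then e i else 0) (a := k)
    (by simp)]
  exact Finset.sum_congr rfl fun i hi => (if_pos (Finset.ne_of_mem_erase hi).symm).symm

/-- Auxiliary: the interaction of the point `x` with the clusters `k' ≠ k`. -/
def Afun (g : R2 → R2 → ℝ) {m : ℕ} (Γ : Fin m → ℝ) (α : Fin m → R2) (k : Fin m) (x : R2) : ℝ :=
  ∑ k' ∈ Finset.univ.erase k, Γ k' * Gf g x (α k')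

/-- Auxiliary: closed form of `x ↦ 𝓗(update α k x)`. -/
lemma identPsi {m : ℕ} (g : R2 → R2 → ℝ) (hgsymm : ∀ x y, g x y = g y x) (Γ : Fin m → ℝ)
    (α : Fin m → R2) (k : Fin m) :
    ∃ Cst : ℝ, ∀ x : R2, mHam g Γ (Function.update α k x)
      = Cst + 2 * Γ k * Afun g Γ α k x - Γ k ^ 2 * g x x := by
  have hGf : ∀ y z, Gf g y z = Gf g z y := by
    intro y z; unfold Gf; rw [norm_sub_rev, hgsymm]
  refine ⟨(∑ K ∈ Finset.univ.erase k, ∑ K' ∈ Finset.univ.erase k,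
        (if K ≠ K' then Γ K * Γ K' * Gf g (α K) (α K') else 0))
      - ∑ K ∈ Finset.univ.erase k, Γ K ^ 2 * g (α K) (α K), fun x => ?_⟩
  unfold mHam
  rw [sum_split k (fun K K' => if K ≠ K' then
      Γ K * Γ K' * Gf g (Function.update α k x K) (Function.update α k x K') else 0),
    ← Finset.add_sum_erase _ (fun K => Γ K ^ 2 *
      g (Function.update α k x K) (Function.update α k x K)) (Finset.mem_univ k)]
  have e1 : (if k ≠ k then Γ k * Γ k *
      Gf g (Function.update α k x k) (Function.update α k x k) else 0) = 0 := by simp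
  have e2 : ∑ K' ∈ Finset.univ.erase k, (if k ≠ K' then Γ k * Γ K' *
      Gf g (Function.update α k x k) (Function.update α k x K') else 0)
      = Γ k * Afun g Γ α k x := by
    unfold Afun
    rw [Finset.mul_sum]
    refine Finset.sum_congr rfl fun K' hK' => ?_
    rw [Function.update_self, Function.update_of_ne (Finset.ne_of_mem_erase hK'),
      if_pos (Finset.ne_of_mem_erase hK').symm]
    ring
  have e3 : ∑ K ∈ Finset.univ.erase k, (if K ≠ k then Γ K * Γ k *
      Gf g (Function.update α k x K) (Function.update α k x k) else 0)
      = Γ k * Afun g Γ α k x := by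
    unfold Afun
    rw [Finset.mul_sum]
    refine Finset.sum_congr rfl fun K hK => ?_
    rw [Function.update_self, Function.update_of_ne (Finset.ne_of_mem_erase hK),
      if_pos (Finset.ne_of_mem_erase hK), hGf]
    ring
  have e4 : ∑ K ∈ Finset.univ.erase k, ∑ K' ∈ Finset.univ.erase k, (if K ≠ K' then Γ K * Γ K' *
      Gf g (Function.update α k x K) (Function.update α k x K') else 0)
      = ∑ K ∈ Finset.univ.erase k, ∑ K' ∈ Finset.univ.erase k,
        (if K ≠ K' then Γ K * Γ K' * Gf g (α K) (α K') else 0) := by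
    refine Finset.sum_congr rfl fun K hK => Finset.sum_congr rfl fun K' hK' => ?_
    rw [Function.update_of_ne (Finset.ne_of_mem_erase hK),
      Function.update_of_ne (Finset.ne_of_mem_erase hK')]
  have e5 : ∑ K ∈ Finset.univ.erase k, Γ K ^ 2 *
      g (Function.update α k x K) (Function.update α k x K)
      = ∑ K ∈ Finset.univ.erase k, Γ K ^ 2 * g (α K) (α K) := by
    refine Finset.sum_congr rfl fun K hK => ?_
    rw [Function.update_of_ne (Finset.ne_of_mem_erase hK)]
  rw [e1, e2, e3, e4, e5, Function.update_self]
  ring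

lemma identPhi {m : ℕ} {Nk : Fin m → ℕ} (g : R2 → R2 → ℝ) (hgsymm : ∀ x y, g x y = g y x)
    (Γ : Fin m → ℝ) (Γc : (k : Fin m) → Fin (Nk k) → ℝ) (hA2 : ∀ k, ∑ j, Γc k j = Γ k)
    (α : Fin m → R2) (k : Fin m) (j : Fin (Nk k)) :
    ∃ Cst : ℝ, ∀ p : R2,
      Ffun g Γc α (Function.update 0 ⟨k, j⟩ p)
        = Cst + 2 * Γc k j * Afun g Γ α k (p + α k)
            - Γc k j ^ 2 * g (p + α k) (p + α k)
            - 2 * Γc k j * (Γ k - Γc k j) * g (p + α k) (α k) := by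
  have hGf : ∀ y z, Gf g y z = Gf g z y := by
    intro y z; unfold Gf; rw [norm_sub_rev, hgsymm]
  have herase : ∑ j' ∈ Finset.univ.erase j, Γc k j' = Γ k - Γc k j := by
    have h := Finset.add_sum_erase Finset.univ (Γc k) (Finset.mem_univ j)
    rw [hA2 k] at h
    linarith
  refine ⟨(∑ i ∈ Finset.univ.erase (⟨k, j⟩ : (K : Fin m) × Fin (Nk K)),
        ∑ i' ∈ Finset.univ.erase (⟨k, j⟩ : (K : Fin m) × Fin (Nk K)),
        if i.1 ≠ i'.1 then Γc i.1 i.2 * Γc i'.1 i'.2 * Gf g (α i.1) (α i'.1) else 0)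
      - ((Γ k - Γc k j) * ((Γ k - Γc k j) * g (α k) (α k))
         + ∑ K ∈ Finset.univ.erase k, ∑ j₁, ∑ j₂, Γc K j₁ * Γc K j₂ * g (α K) (α K)),
    fun p => ?_⟩
  have hzI : Function.update (0 : ((K : Fin m) × Fin (Nk K)) → R2) ⟨k, j⟩ p ⟨k, j⟩ = p :=
    Function.update_self _ _ _
  have hzne : ∀ i : (K : Fin m) × Fin (Nk K), i ≠ ⟨k, j⟩ →
      Function.update (0 : ((K : Fin m) × Fin (Nk K)) → R2) ⟨k, j⟩ p i = 0 := by
    intro i hi; rw [Function.update_of_ne hi]; rfl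
  have hne1 : ∀ (K : Fin m) (j₁ : Fin (Nk K)), K ≠ k →
      (⟨K, j₁⟩ : (K : Fin m) × Fin (Nk K)) ≠ ⟨k, j⟩ :=
    fun K j₁ hK h => hK (congrArg Sigma.fst h)
  have hne2 : ∀ j' : Fin (Nk k), j' ≠ j → (⟨k, j'⟩ : (K : Fin m) × Fin (Nk K)) ≠ ⟨k, j⟩ := by
    intro j' hj' h
    injection h with h1 h2
    exact hj' h2
  set z := Function.update (0 : ((K : Fin m) × Fin (Nk K)) → R2) ⟨k, j⟩ p with hzdef
  unfold Ffun
  rw [sum_split (⟨k, j⟩ : (K : Fin m) × Fin (Nk K)) (fun i i' => if i.1 ≠ i'.1 then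
      Γc i.1 i.2 * Γc i'.1 i'.2 * Gf g (z i + α i.1) (z i' + α i'.1) else 0),
    ← Finset.add_sum_erase _ (fun K => ∑ j₁, ∑ j₂, Γc K j₁ * Γc K j₂ *
      g (z ⟨K, j₁⟩ + α K) (z ⟨K, j₂⟩ + α K)) (Finset.mem_univ k)]
  -- piece 1 : diagonal cross term vanishes
  have p1 : (if (⟨k, j⟩ : (K : Fin m) × Fin (Nk K)).1 ≠ (⟨k, j⟩ : (K : Fin m) × Fin (Nk K)).1
      then Γc k j * Γc k j * Gf g (z ⟨k, j⟩ + α k) (z ⟨k, j⟩ + α k) else 0) = 0 := by simp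
  -- piece 2
  have p2 : ∑ i' ∈ Finset.univ.erase (⟨k, j⟩ : (K : Fin m) × Fin (Nk K)),
      (if (⟨k, j⟩ : (K : Fin m) × Fin (Nk K)).1 ≠ i'.1 then
        Γc k j * Γc i'.1 i'.2 * Gf g (z ⟨k, j⟩ + α k) (z i' + α i'.1) else 0)
      = Γc k j * Afun g Γ α k (p + α k) := by
    have hterm : ∀ i' ∈ Finset.univ.erase (⟨k, j⟩ : (K : Fin m) × Fin (Nk K)),
        (if (⟨k, j⟩ : (K : Fin m) × Fin (Nk K)).1 ≠ i'.1 then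
          Γc k j * Γc i'.1 i'.2 * Gf g (z ⟨k, j⟩ + α k) (z i' + α i'.1) else 0)
        = (if k ≠ i'.1 then Γc k j * Γc i'.1 i'.2 * Gf g (p + α k) (α i'.1) else 0) := by
      intro i' hi'
      by_cases h : k ≠ i'.1
      · rw [if_pos h, if_pos h, hzI, hzne i' (Finset.ne_of_mem_erase hi'), zero_add]
      · rw [if_neg h, if_neg h]
    rw [Finset.sum_congr rfl hterm,
      Finset.sum_erase (Finset.univ) (a := (⟨k, j⟩ : (K : Fin m) × Fin (Nk K))) (by simp),
      ← Finset.univ_sigma_univ, Finset.sum_sigma]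
    have hinner : ∀ K : Fin m, ∑ j' : Fin (Nk K),
        (if k ≠ K then Γc k j * Γc K j' * Gf g (p + α k) (α K) else 0)
        = (if k ≠ K then Γc k j * (Γ K * Gf g (p + α k) (α K)) else 0) := by
      intro K
      by_cases h : k ≠ K
      · simp only [if_pos h]
        rw [← Finset.sum_mul, ← Finset.mul_sum, hA2]; ring
      · simp [h]
    rw [Finset.sum_congr rfl fun K _ => hinner K, ← ite_sum_full k
      (fun K => Γc k j * (Γ K * Gf g (p + α k) (α K)))]
    unfold Afun
    rw [Finset.mul_sum]
  -- piece 3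
  have p3 : ∑ i ∈ Finset.univ.erase (⟨k, j⟩ : (K : Fin m) × Fin (Nk K)),
      (if i.1 ≠ (⟨k, j⟩ : (K : Fin m) × Fin (Nk K)).1 then
        Γc i.1 i.2 * Γc k j * Gf g (z i + α i.1) (z ⟨k, j⟩ + α k) else 0)
      = Γc k j * Afun g Γ α k (p + α k) := by
    have hterm : ∀ i ∈ Finset.univ.erase (⟨k, j⟩ : (K : Fin m) × Fin (Nk K)),
        (if i.1 ≠ (⟨k, j⟩ : (K : Fin m) × Fin (Nk K)).1 then
          Γc i.1 i.2 * Γc k j * Gf g (z i + α i.1) (z ⟨k, j⟩ + α k) else 0)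
        = (if k ≠ i.1 then Γc k j * Γc i.1 i.2 * Gf g (p + α k) (α i.1) else 0) := by
      intro i hi
      by_cases h : k ≠ i.1
      · rw [if_pos h.symm, if_pos h, hzI, hzne i (Finset.ne_of_mem_erase hi), zero_add,
          hGf]
        ring
      · rw [if_neg (fun h' => h h'.symm), if_neg h]
    rw [Finset.sum_congr rfl hterm,
      Finset.sum_erase (Finset.univ) (a := (⟨k, j⟩ : (K : Fin m) × Fin (Nk K))) (by simp),
      ← Finset.univ_sigma_univ, Finset.sum_sigma]
    have hinner : ∀ K : Fin m, ∑ j' : Fin (Nk K),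
        (if k ≠ K then Γc k j * Γc K j' * Gf g (p + α k) (α K) else 0)
        = (if k ≠ K then Γc k j * (Γ K * Gf g (p + α k) (α K)) else 0) := by
      intro K
      by_cases h : k ≠ K
      · simp only [if_pos h]
        rw [← Finset.sum_mul, ← Finset.mul_sum, hA2]; ring
      · simp [h]
    rw [Finset.sum_congr rfl fun K _ => hinner K, ← ite_sum_full k
      (fun K => Γc k j * (Γ K * Gf g (p + α k) (α K)))]
    unfold Afun
    rw [Finset.mul_sum]
  -- piece 4
  have p4 : ∑ i ∈ Finset.univ.erase (⟨k, j⟩ : (K : Fin m) × Fin (Nk K)),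
      ∑ i' ∈ Finset.univ.erase (⟨k, j⟩ : (K : Fin m) × Fin (Nk K)),
      (if i.1 ≠ i'.1 then Γc i.1 i.2 * Γc i'.1 i'.2 * Gf g (z i + α i.1) (z i' + α i'.1) else 0)
      = ∑ i ∈ Finset.univ.erase (⟨k, j⟩ : (K : Fin m) × Fin (Nk K)),
        ∑ i' ∈ Finset.univ.erase (⟨k, j⟩ : (K : Fin m) × Fin (Nk K)),
        (if i.1 ≠ i'.1 then Γc i.1 i.2 * Γc i'.1 i'.2 * Gf g (α i.1) (α i'.1) else 0) := by
    refine Finset.sum_congr rfl fun i hi => Finset.sum_congr rfl fun i' hi' => ?_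
    rw [hzne i (Finset.ne_of_mem_erase hi), hzne i' (Finset.ne_of_mem_erase hi'),
      zero_add, zero_add]
  -- self-cluster sums with K ≠ k
  have p5 : ∑ K ∈ Finset.univ.erase k, ∑ j₁, ∑ j₂, Γc K j₁ * Γc K j₂ *
      g (z ⟨K, j₁⟩ + α K) (z ⟨K, j₂⟩ + α K)
      = ∑ K ∈ Finset.univ.erase k, ∑ j₁, ∑ j₂, Γc K j₁ * Γc K j₂ * g (α K) (α K) := by
    refine Finset.sum_congr rfl fun K hK => Finset.sum_congr rfl fun j₁ _ =>
      Finset.sum_congr rfl fun j₂ _ => ?_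
    rw [hzne _ (hne1 K j₁ (Finset.ne_of_mem_erase hK)),
      hzne _ (hne1 K j₂ (Finset.ne_of_mem_erase hK)), zero_add]
  -- self-cluster sum for K = k
  have p6 : ∑ j₁, ∑ j₂, Γc k j₁ * Γc k j₂ * g (z ⟨k, j₁⟩ + α k) (z ⟨k, j₂⟩ + α k)
      = Γc k j * Γc k j * g (p + α k) (p + α k)
        + 2 * (Γc k j * ((Γ k - Γc k j) * g (p + α k) (α k)))
        + (Γ k - Γc k j) * ((Γ k - Γc k j) * g (α k) (α k)) := by
    rw [sum_split j (fun j₁ j₂ => Γc k j₁ * Γc k j₂ * g (z ⟨k, j₁⟩ + α k) (z ⟨k, j₂⟩ + α k))]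
    have q1 : Γc k j * Γc k j * g (z ⟨k, j⟩ + α k) (z ⟨k, j⟩ + α k)
        = Γc k j * Γc k j * g (p + α k) (p + α k) := by rw [hzI]
    have q2 : ∑ j₂ ∈ Finset.univ.erase j, Γc k j * Γc k j₂ *
        g (z ⟨k, j⟩ + α k) (z ⟨k, j₂⟩ + α k)
        = Γc k j * ((Γ k - Γc k j) * g (p + α k) (α k)) := by
      have : ∀ j₂ ∈ Finset.univ.erase j, Γc k j * Γc k j₂ *
          g (z ⟨k, j⟩ + α k) (z ⟨k, j₂⟩ + α k)
          = Γc k j * Γc k j₂ * g (p + α k) (α k) := by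
        intro j₂ hj₂
        rw [hzI, hzne _ (hne2 j₂ (Finset.ne_of_mem_erase hj₂)), zero_add]
      rw [Finset.sum_congr rfl this, ← Finset.sum_mul, ← Finset.mul_sum, herase]
      ring
    have q3 : ∑ j₁ ∈ Finset.univ.erase j, Γc k j₁ * Γc k j *
        g (z ⟨k, j₁⟩ + α k) (z ⟨k, j⟩ + α k)
        = Γc k j * ((Γ k - Γc k j) * g (p + α k) (α k)) := by
      have : ∀ j₁ ∈ Finset.univ.erase j, Γc k j₁ * Γc k j *
          g (z ⟨k, j₁⟩ + α k) (z ⟨k, j⟩ + α k)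
          = Γc k j₁ * (Γc k j * g (p + α k) (α k)) := by
        intro j₁ hj₁
        rw [hzI, hzne _ (hne2 j₁ (Finset.ne_of_mem_erase hj₁)), zero_add, hgsymm (α k)]
        ring
      rw [Finset.sum_congr rfl this, ← Finset.sum_mul, herase]
      ring
    have q4 : ∑ j₁ ∈ Finset.univ.erase j, ∑ j₂ ∈ Finset.univ.erase j, Γc k j₁ * Γc k j₂ *
        g (z ⟨k, j₁⟩ + α k) (z ⟨k, j₂⟩ + α k)
        = (Γ k - Γc k j) * ((Γ k - Γc k j) * g (α k) (α k)) := by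
      have : ∀ j₁ ∈ Finset.univ.erase j, ∑ j₂ ∈ Finset.univ.erase j, Γc k j₁ * Γc k j₂ *
          g (z ⟨k, j₁⟩ + α k) (z ⟨k, j₂⟩ + α k)
          = Γc k j₁ * ((Γ k - Γc k j) * g (α k) (α k)) := by
        intro j₁ hj₁
        have h2 : ∀ j₂ ∈ Finset.univ.erase j, Γc k j₁ * Γc k j₂ *
            g (z ⟨k, j₁⟩ + α k) (z ⟨k, j₂⟩ + α k)
            = Γc k j₁ * Γc k j₂ * g (α k) (α k) := by
          intro j₂ hj₂
          rw [hzne _ (hne2 j₁ (Finset.ne_of_mem_erase hj₁)),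
            hzne _ (hne2 j₂ (Finset.ne_of_mem_erase hj₂)), zero_add]
        rw [Finset.sum_congr rfl h2, ← Finset.sum_mul, ← Finset.mul_sum, herase]
        ring
      rw [Finset.sum_congr rfl this, ← Finset.sum_mul, herase]
    rw [q1, q2, q3, q4]
    ring
  rw [p1, p2, p3, p4, p5, p6]
  ring


/-- `Γᵏ·∇_{zᵏⱼ}F(0) = Γᵏⱼ·∇_{aᵏ}𝓗(α)`; if `α` is critical then `∇F(0) = 0`. -/
theorem statement6
    (Ω : Set R2) (hΩopen : IsOpen Ω) (hΩconn : IsConnected Ω)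
    (g : R2 → R2 → ℝ)
    (hg : ContDiffOn ℝ 2 (fun p : R2 × R2 => g p.1 p.2) (Ω ×ˢ Ω))
    (hgsymm : ∀ x y, g x y = g y x)
    (m : ℕ) (Γ : Fin m → ℝ) (hΓ : ∀ k, Γ k ≠ 0)
    (Nk : Fin m → ℕ) (hNk : ∀ k, 1 ≤ Nk k)
    (Γc : (k : Fin m) → Fin (Nk k) → ℝ) (hΓc : ∀ k j, Γc k j ≠ 0)
    (hA2 : ∀ k, ∑ j, Γc k j = Γ k)
    (α : Fin m → R2) (hα : Conf Ω α) :
    (∀ (k : Fin m) (j : Fin (Nk k)),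
        Γ k • pgrad (Ffun g Γc α) 0 ⟨k, j⟩ = Γc k j • pgrad (mHam g Γ) α k) ∧
    ((∀ k, pgrad (mHam g Γ) α k = 0) → ∀ i, pgrad (Ffun g Γc α) 0 i = 0) := by
  obtain ⟨hαΩ, hαne⟩ := hα
  have key : ∀ (k : Fin m) (j : Fin (Nk k)),
      Γ k • pgrad (Ffun g Γc α) 0 ⟨k, j⟩ = Γc k j • pgrad (mHam g Γ) α k := by
    intro k j
    have hopen : IsOpen (Ω ×ˢ Ω) := hΩopen.prod hΩopen
    have hgd : ∀ x ∈ Ω, ∀ y ∈ Ω, DifferentiableAt ℝ (fun q : R2 × R2 => g q.1 q.2) (x, y) := by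
      intro x hx y hy
      exact (hg.contDiffAt (hopen.mem_nhds ⟨hx, hy⟩)).differentiableAt (by norm_num)
    set D := fderiv ℝ (fun q : R2 × R2 => g q.1 q.2) (α k, α k) with hDdef
    have hDd : HasFDerivAt (fun q : R2 × R2 => g q.1 q.2) D (α k, α k) :=
      (hgd _ (hαΩ k) _ (hαΩ k)).hasFDerivAt
    have hswap : HasFDerivAt (fun q : R2 × R2 => g q.1 q.2)
        (D.comp ((ContinuousLinearEquiv.prodComm ℝ R2 R2 : (R2 × R2) ≃L[ℝ] (R2 × R2)) :
          R2 × R2 →L[ℝ] R2 × R2)) (α k, α k) := by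
      have h1 := HasFDerivAt.comp (x := ((α k, α k) : R2 × R2)) hDd
        (ContinuousLinearEquiv.prodComm ℝ R2 R2).hasFDerivAt
      have h2 : ((fun q : R2 × R2 => g q.1 q.2) ∘
          (ContinuousLinearEquiv.prodComm ℝ R2 R2)) = fun q : R2 × R2 => g q.1 q.2 := by
        funext q; exact hgsymm q.2 q.1
      rwa [h2] at h1
    have hDsymm : ∀ u v : R2, D (u, v) = D (v, u) := by
      intro u v
      have h3 := hswap.unique hDd
      have h4 : D.comp ((ContinuousLinearEquiv.prodComm ℝ R2 R2 : (R2 × R2) ≃L[ℝ] (R2 × R2)) :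
          R2 × R2 →L[ℝ] R2 × R2) (v, u) = D (u, v) := rfl
      rw [← h4, h3]
    set LB := D.comp ((ContinuousLinearMap.id ℝ R2).prod (ContinuousLinearMap.id ℝ R2))
      with hLBdef
    set LC := D.comp ((ContinuousLinearMap.id ℝ R2).prod 0) with hLCdef
    have hBd : HasFDerivAt (fun x : R2 => g x x) LB (α k) := by
      have h := HasFDerivAt.comp (x := α k) (f := fun x : R2 => ((x, x) : R2 × R2)) hDd
        (HasFDerivAt.prodMk (hasFDerivAt_id (α k)) (hasFDerivAt_id (α k)))
      exact h
    have hCd : HasFDerivAt (fun x : R2 => g x (α k)) LC (α k) := by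
      have h := HasFDerivAt.comp (x := α k) (f := fun x : R2 => ((x, α k) : R2 × R2)) hDd
        (HasFDerivAt.prodMk (hasFDerivAt_id (α k)) (hasFDerivAt_const (α k) (α k)))
      exact h
    have hBC : LB = (2 : ℝ) • LC := by
      ext u
      have h5 : ((u, u) : R2 × R2) = (u, 0) + (0, u) := by simp
      simp only [hLBdef, hLCdef, ContinuousLinearMap.comp_apply,
        ContinuousLinearMap.prod_apply, ContinuousLinearMap.id_apply,
        ContinuousLinearMap.zero_apply, ContinuousLinearMap.smul_apply, smul_eq_mul]
      rw [h5, map_add, hDsymm 0 u, two_mul]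
    have hAd : DifferentiableAt ℝ (Afun g Γ α k) (α k) := by
      unfold Afun
      apply DifferentiableAt.fun_sum
      intro K hK
      have hKk : K ≠ k := Finset.ne_of_mem_erase hK
      apply DifferentiableAt.const_mul
      unfold Gf
      apply DifferentiableAt.sub
      · apply DifferentiableAt.const_mul
        apply DifferentiableAt.log
        · exact (differentiableAt_id.sub (differentiableAt_const _)).norm ℝ
            (sub_ne_zero.mpr (hαne k K hKk.symm))
        · exact norm_ne_zero_iff.mpr (sub_ne_zero.mpr (hαne k K hKk.symm))
      · have h := DifferentiableAt.comp (x := α k) (f := fun x : R2 => ((x, α K) : R2 × R2))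
          (hgd _ (hαΩ k) _ (hαΩ K)) (differentiableAt_id.prodMk (differentiableAt_const (α K)))
        exact h
    set dA := fderiv ℝ (Afun g Γ α k) (α k) with hdAdef
    have hAd' : HasFDerivAt (Afun g Γ α k) dA (α k) := hAd.hasFDerivAt
    obtain ⟨Cψ, hCψ⟩ := identPsi g hgsymm Γ α k
    obtain ⟨Cφ, hCφ⟩ := identPhi g hgsymm Γ Γc hA2 α k j
    have hψfun : (fun x => mHam g Γ (Function.update α k x))
        = fun x => Cψ + 2 * Γ k * Afun g Γ α k x - Γ k ^ 2 * g x x := funext hCψ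
    have hψ : HasFDerivAt (fun x => mHam g Γ (Function.update α k x))
        ((2 * Γ k) • dA - (Γ k ^ 2) • LB) (α k) := by
      rw [hψfun]
      exact ((hAd'.const_mul (2 * Γ k)).const_add Cψ).sub (hBd.const_mul (Γ k ^ 2))
    have hplus : HasFDerivAt (fun q : R2 => q + α k) (ContinuousLinearMap.id ℝ R2) 0 :=
      (hasFDerivAt_id 0).add_const (α k)
    have h0a : ((0 : R2) + α k) = α k := zero_add _
    have hAt : HasFDerivAt (fun q : R2 => Afun g Γ α k (q + α k))
        (dA.comp (ContinuousLinearMap.id ℝ R2)) 0 := by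
      have h := HasFDerivAt.comp (x := (0 : R2)) (h0a.symm ▸ hAd') hplus
      exact h
    have hBt : HasFDerivAt (fun q : R2 => g (q + α k) (q + α k))
        (LB.comp (ContinuousLinearMap.id ℝ R2)) 0 := by
      have h := HasFDerivAt.comp (x := (0 : R2)) (h0a.symm ▸ hBd) hplus
      exact h
    have hCt : HasFDerivAt (fun q : R2 => g (q + α k) (α k))
        (LC.comp (ContinuousLinearMap.id ℝ R2)) 0 := by
      have hCd0 : HasFDerivAt (fun x : R2 => g x (α k)) LC ((0 : R2) + α k) := by
        rw [h0a]; exact hCd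
      have h := HasFDerivAt.comp (x := (0 : R2)) hCd0 hplus
      exact h
    have hφfun : (fun q : R2 => Ffun g Γc α (Function.update 0 ⟨k, j⟩ q))
        = fun q : R2 => Cφ + 2 * Γc k j * Afun g Γ α k (q + α k)
            - Γc k j ^ 2 * g (q + α k) (q + α k)
            - 2 * Γc k j * (Γ k - Γc k j) * g (q + α k) (α k) := funext hCφ
    have hφ : HasFDerivAt (fun q : R2 => Ffun g Γc α (Function.update 0 ⟨k, j⟩ q))
        ((2 * Γc k j) • (dA.comp (ContinuousLinearMap.id ℝ R2))
          - (Γc k j ^ 2) • (LB.comp (ContinuousLinearMap.id ℝ R2))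
          - (2 * Γc k j * (Γ k - Γc k j)) • (LC.comp (ContinuousLinearMap.id ℝ R2))) 0 := by
      rw [hφfun]
      exact (((hAt.const_mul (2 * Γc k j)).const_add Cφ).sub
        (hBt.const_mul (Γc k j ^ 2))).sub (hCt.const_mul (2 * Γc k j * (Γ k - Γc k j)))
    have hgrad : ∀ (f : R2 → ℝ) (x : R2), gradient f x
        = (InnerProductSpace.toDual ℝ R2).symm (fderiv ℝ f x) := fun _ _ => rfl
    unfold pgrad
    simp only [Pi.zero_apply]
    rw [hgrad, hgrad, hφ.fderiv, hψ.fderiv, ← map_smul, ← map_smul]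
    congr 1
    rw [hBC]
    simp only [ContinuousLinearMap.comp_id]
    module
  refine ⟨key, fun hcrit i => ?_⟩
  obtain ⟨k, j⟩ := i
  have h := key k j
  rw [hcrit k, smul_zero] at h
  exact (smul_eq_zero.mp h).resolve_left (hΓ k)
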